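/- Let m ≥ 2 and n be positive integers, and for each i ∈ [m] let R_i be a nonempty subset of [n]. Fix an index i_0 with max(R_{i_0}) = max_i max(R_i), set k_1 = max(R_{i_0}) and k_2 = max_{i ≠ i_0} max(R_i), and assume n ≥ k_1 + k_2. Let F_1 ⊆ binom([n],R_1), ..., F_m ⊆ binom([n],R_m) be monotone, left-compressed, non-empty cross-intersecting families whose total size Σ_{j=1}^m |F_j| is maximal among all non-empty cross-intersecting tuples (F'_1 ⊆ binom([n],R_1), ..., F'_m ⊆ binom([n],R_m)). Let G_j be the generating family of F_j and let l be the maximum of the extents of F_1, ..., F_m. If 1 < u ≤ l and there exist i ∈ [m] and E ∈ G_i with |E| = u and l ∈ E, then there exist j ∈ [m]\{i} and F ∈ G_j with |F| = l + 1 − u and l ∈ F; moreover, for any E ∈ G_i and F ∈ G_j with j ≠ i and E ∩ F = {l}, one has E ∪ F = [l] and |E| + |F| = l + 1. -/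

import Mathlib

open Finset

/-- binom([n],R): all subsets of [n] = {1,...,n} whose cardinality lies in R. -/
def famR (n : ℕ) (R : Finset ℕ) : Finset (Finset ℕ) :=
  (Finset.Icc 1 n).powerset.filter (fun A => A.card ∈ R)

/-- The up-set ⟨E⟩_R of E inside binom([n],R). -/
def upSet (n : ℕ) (R : Finset ℕ) (E : Finset ℕ) : Finset (Finset ℕ) :=
  (famR n R).filter (fun A => E ⊆ A)

/-- F ⊆ binom([n],R) is monotone. -/
def MonotoneFam (n : ℕ) (R : Finset ℕ) (F : Finset (Finset ℕ)) : Prop :=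
  ∀ A ∈ F, ∀ B, A ⊆ B → B ⊆ Finset.Icc 1 n → B.card ∈ R → B ∈ F

/-- The shift s_{i,j} applied to a member A of F. -/
def shiftSet (F : Finset (Finset ℕ)) (i j : ℕ) (A : Finset ℕ) : Finset ℕ :=
  if j ∈ A ∧ i ∉ A ∧ insert i (A.erase j) ∉ F then insert i (A.erase j) else A

/-- The shift s_{i,j} applied to the family F. -/
def shiftFam (i j : ℕ) (F : Finset (Finset ℕ)) : Finset (Finset ℕ) :=
  F.image (shiftSet F i j)

/-- F is left-compressed: s_{i,j}(F) = F for all 1 ≤ i < j ≤ n. -/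
def LeftCompressed (n : ℕ) (F : Finset (Finset ℕ)) : Prop :=
  ∀ i j, 1 ≤ i → i < j → j ≤ n → shiftFam i j F = F

/-- E is a generating set of the monotone family F ⊆ binom([n],R). -/
def IsGenSet (n : ℕ) (R : Finset ℕ) (F : Finset (Finset ℕ)) (E : Finset ℕ) : Prop :=
  E ⊆ Finset.Icc 1 n ∧ E.card ≤ R.sup id ∧ upSet n R E ⊆ F ∧
    ∀ E', E' ⊂ E → ¬ upSet n R E' ⊆ F

lemma mem_upSet {n : ℕ} {R E A : Finset ℕ} :
    A ∈ upSet n R E ↔ A ⊆ Finset.Icc 1 n ∧ A.card ∈ R ∧ E ⊆ A := by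
  simp [upSet, famR, and_assoc]

lemma sup_mem_R {R : Finset ℕ} (h : R.Nonempty) : R.sup id ∈ R := by
  obtain ⟨b, hb, he⟩ := Finset.exists_mem_eq_sup R h id
  rw [he]; exact hb

lemma exists_gen_subset {n : ℕ} {R : Finset ℕ} {F : Finset (Finset ℕ)}
    (hF : F ⊆ famR n R) (hmono : MonotoneFam n R F) {B : Finset ℕ} (hB : B ∈ F) :
    ∃ G, G ⊆ B ∧ IsGenSet n R F G := by
  have hBfam : B ∈ famR n R := hF hB
  rw [famR, Finset.mem_filter, Finset.mem_powerset] at hBfam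
  have hBup : upSet n R B ⊆ F := by
    intro A hA
    rw [mem_upSet] at hA
    exact hmono B hB A hA.2.2 hA.1 hA.2.1
  classical
  set s := B.powerset.filter (fun S => upSet n R S ⊆ F) with hs
  have hBs : B ∈ s := by simp [hs, hBup]
  obtain ⟨G, hGs, hGmin⟩ := Finset.exists_min_image s (fun S => S.card) ⟨B, hBs⟩
  rw [hs, Finset.mem_filter, Finset.mem_powerset] at hGs
  refine ⟨G, hGs.1, hGs.1.trans hBfam.1, ?_, hGs.2, ?_⟩
  · exact le_trans (Finset.card_le_card hGs.1) (Finset.le_sup (f := id) hBfam.2)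
  · intro E' hE' hcon
    have hmem : E' ∈ s := by
      rw [hs, Finset.mem_filter, Finset.mem_powerset]
      exact ⟨hE'.subset.trans hGs.1, hcon⟩
    exact absurd (hGmin E' hmem) (not_le.2 (Finset.card_lt_card hE'))

lemma shift_upSet {n : ℕ} {R : Finset ℕ} {F : Finset (Finset ℕ)}
    (hlc : LeftCompressed n F) {E : Finset ℕ} {t l : ℕ}
    (ht : 1 ≤ t) (htl : t < l) (hln : l ≤ n)
    (hlE : l ∈ E) (htE : t ∉ E) (hup : upSet n R E ⊆ F) :
    upSet n R (insert t (E.erase l)) ⊆ F := by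
  intro A hA
  rw [mem_upSet] at hA
  obtain ⟨hAsub, hAcard, hEA⟩ := hA
  by_cases hlA : l ∈ A
  · apply hup
    rw [mem_upSet]
    refine ⟨hAsub, hAcard, fun x hx => ?_⟩
    by_cases hxl : x = l
    · subst hxl; exact hlA
    · exact hEA (Finset.mem_insert_of_mem (Finset.mem_erase.2 ⟨hxl, hx⟩))
  · have htA : t ∈ A := hEA (Finset.mem_insert_self _ _)
    have hlAe : l ∉ A.erase t := fun h => hlA (Finset.mem_of_mem_erase h)
    have htA' : t ∉ insert l (A.erase t) := by
      simp only [Finset.mem_insert, Finset.mem_erase]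
      rintro (h | ⟨h, _⟩) <;> omega
    have hA'F : insert l (A.erase t) ∈ F := by
      apply hup
      rw [mem_upSet]
      refine ⟨?_, ?_, ?_⟩
      · intro x hx
        rcases Finset.mem_insert.1 hx with h | h
        · subst h; exact Finset.mem_Icc.2 ⟨by omega, hln⟩
        · exact hAsub (Finset.mem_of_mem_erase h)
      · rwa [Finset.card_insert_of_notMem hlAe, Finset.card_erase_of_mem htA,
          Nat.sub_add_cancel (Finset.card_pos.2 ⟨t, htA⟩)]
      · intro x hx
        by_cases hxl : x = l
        · subst hxl; exact Finset.mem_insert_self _ _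
        · have hxA : x ∈ A := hEA (Finset.mem_insert_of_mem (Finset.mem_erase.2 ⟨hxl, hx⟩))
          have hxt : x ≠ t := fun h => htE (h ▸ hx)
          exact Finset.mem_insert_of_mem (Finset.mem_erase.2 ⟨hxt, hxA⟩)
    by_contra hAF
    have hsh : shiftSet F t l (insert l (A.erase t)) = A := by
      rw [shiftSet, if_pos]
      · rw [Finset.erase_insert hlAe, Finset.insert_erase htA]
      · refine ⟨Finset.mem_insert_self _ _, htA', ?_⟩
        rwa [Finset.erase_insert hlAe, Finset.insert_erase htA]
    have hmem : A ∈ shiftFam t l F := Finset.mem_image.2 ⟨_, hA'F, hsh⟩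
    rw [hlc t l ht htl hln] at hmem
    exact hAF hmem

lemma disjoint_contra {m n : ℕ} {R : Fin m → Finset ℕ} (hRne : ∀ i, (R i).Nonempty)
    {i0 : Fin m} (hi0 : ∀ i, (R i).sup id ≤ (R i0).sup id)
    {k2 : ℕ} (hk2 : IsGreatest {x | ∃ i, i ≠ i0 ∧ x = (R i).sup id} k2)
    (hn2 : (R i0).sup id + k2 ≤ n)
    {F : Fin m → Finset (Finset ℕ)}
    (hcross : ∀ i j, i ≠ j → ∀ A ∈ F i, ∀ B ∈ F j, (A ∩ B).Nonempty)
    {i j : Fin m} (hij : i ≠ j) {S₁ S₂ : Finset ℕ}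
    (h1sub : S₁ ⊆ Finset.Icc 1 n) (h2sub : S₂ ⊆ Finset.Icc 1 n)
    (hdisj : S₁ ∩ S₂ = ∅)
    (h1card : S₁.card ≤ (R i).sup id) (h2card : S₂.card ≤ (R j).sup id)
    (h1up : upSet n (R i) S₁ ⊆ F i) (h2up : upSet n (R j) S₂ ⊆ F j) : False := by
  set ki := (R i).sup id with hki
  set kj := (R j).sup id with hkj
  have hsum : ki + kj ≤ n := by
    by_cases hii0 : i = i0
    · have hj0 : j ≠ i0 := fun h => hij (hii0.trans h.symm)
      have : kj ≤ k2 := hk2.2 ⟨j, hj0, rfl⟩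
      have : ki ≤ (R i0).sup id := hii0 ▸ le_refl _
      omega
    · have h1 : ki ≤ k2 := hk2.2 ⟨i, hii0, rfl⟩
      have h2 : kj ≤ (R i0).sup id := hi0 j
      omega
  have hIccn : (Finset.Icc 1 n).card = n := by rw [Nat.card_Icc]; omega
  have hS1sub : S₁ ⊆ Finset.Icc 1 n \ S₂ := by
    intro x hx
    rw [Finset.mem_sdiff]
    refine ⟨h1sub hx, fun h => ?_⟩
    have : x ∈ S₁ ∩ S₂ := Finset.mem_inter.2 ⟨hx, h⟩
    rw [hdisj] at this; exact absurd this (Finset.notMem_empty x)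
  have hc1 : ki ≤ (Finset.Icc 1 n \ S₂).card := by
    rw [Finset.card_sdiff_of_subset h2sub, hIccn]; omega
  obtain ⟨A, hSA, hAsub, hAcard⟩ := Finset.exists_subsuperset_card_eq hS1sub h1card hc1
  have hAIcc : A ⊆ Finset.Icc 1 n := hAsub.trans (Finset.sdiff_subset)
  have hAF : A ∈ F i := h1up (mem_upSet.2 ⟨hAIcc, hAcard ▸ sup_mem_R (hRne i), hSA⟩)
  have hS2sub : S₂ ⊆ Finset.Icc 1 n \ A := by
    intro x hx
    rw [Finset.mem_sdiff]
    refine ⟨h2sub hx, fun h => ?_⟩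
    exact (Finset.mem_sdiff.1 (hAsub h)).2 hx
  have hc2 : kj ≤ (Finset.Icc 1 n \ A).card := by
    rw [Finset.card_sdiff_of_subset hAIcc, hIccn, hAcard]; omega
  obtain ⟨C, hSC, hCsub, hCcard⟩ := Finset.exists_subsuperset_card_eq hS2sub h2card hc2
  have hCIcc : C ⊆ Finset.Icc 1 n := hCsub.trans (Finset.sdiff_subset)
  have hCF : C ∈ F j := h2up (mem_upSet.2 ⟨hCIcc, hCcard ▸ sup_mem_R (hRne j), hSC⟩)
  obtain ⟨x, hx⟩ := hcross i j hij A hAF C hCF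
  rw [Finset.mem_inter] at hx
  exact (Finset.mem_sdiff.1 (hCsub hx.2)).2 hx.1

theorem stmt11 (m n : ℕ) (hm : 2 ≤ m) (hn : 1 ≤ n)
    (R : Fin m → Finset ℕ) (hRne : ∀ i, (R i).Nonempty)
    (hRsub : ∀ i, R i ⊆ Finset.Icc 1 n)
    (i0 : Fin m) (hi0 : ∀ i, (R i).sup id ≤ (R i0).sup id)
    (k2 : ℕ) (hk2 : IsGreatest {x | ∃ i, i ≠ i0 ∧ x = (R i).sup id} k2)
    (hn2 : (R i0).sup id + k2 ≤ n)
    (F : Fin m → Finset (Finset ℕ))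
    (hF : ∀ i, F i ⊆ famR n (R i))
    (hFne : ∀ i, (F i).Nonempty)
    (hmono : ∀ i, MonotoneFam n (R i) (F i))
    (hlc : ∀ i, LeftCompressed n (F i))
    (hcross : ∀ i j, i ≠ j → ∀ A ∈ F i, ∀ B ∈ F j, (A ∩ B).Nonempty)
    (hmax : ∀ F' : Fin m → Finset (Finset ℕ),
      (∀ i, F' i ⊆ famR n (R i)) → (∀ i, (F' i).Nonempty) →
      (∀ i j, i ≠ j → ∀ A ∈ F' i, ∀ B ∈ F' j, (A ∩ B).Nonempty) →
      ∑ j, (F' j).card ≤ ∑ j, (F j).card)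
    (l : ℕ) (hl : IsGreatest {x | ∃ i E, IsGenSet n (R i) (F i) E ∧ x ∈ E} l)
    (u : ℕ) (hu : 1 < u) (hul : u ≤ l)
    (i : Fin m) (E : Finset ℕ)
    (hE : IsGenSet n (R i) (F i) E) (hEcard : E.card = u) (hEl : l ∈ E) :
    (∃ j, j ≠ i ∧ ∃ G, IsGenSet n (R j) (F j) G ∧ G.card = l + 1 - u ∧ l ∈ G) ∧
    (∀ j, j ≠ i → ∀ E' G, IsGenSet n (R i) (F i) E' → IsGenSet n (R j) (F j) G →
      E' ∩ G = {l} → E' ∪ G = Finset.Icc 1 l ∧ E'.card + G.card = l + 1) := by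
  classical
  have hgenle : ∀ (j : Fin m) (S : Finset ℕ), IsGenSet n (R j) (F j) S → ∀ x ∈ S, x ≤ l :=
    fun j S hS x hx => hl.2 ⟨j, S, hS, hx⟩
  have hgenIcc : ∀ (j : Fin m) (S : Finset ℕ), IsGenSet n (R j) (F j) S →
      S ⊆ Finset.Icc 1 l := by
    intro j S hS x hx
    rw [Finset.mem_Icc]
    exact ⟨(Finset.mem_Icc.1 (hS.1 hx)).1, hgenle j S hS x hx⟩
  have hln : l ≤ n := (Finset.mem_Icc.1 (hE.1 hEl)).2
  have part2 : ∀ j, j ≠ i → ∀ E' G, IsGenSet n (R i) (F i) E' → IsGenSet n (R j) (F j) G →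
      E' ∩ G = {l} → E' ∪ G = Finset.Icc 1 l ∧ E'.card + G.card = l + 1 := by
    intro j hj E' G hE' hG hEG
    have hlE' : l ∈ E' := by
      have h : l ∈ E' ∩ G := by rw [hEG]; exact Finset.mem_singleton_self l
      exact (Finset.mem_inter.1 h).1
    have hlG : l ∈ G := by
      have h : l ∈ E' ∩ G := by rw [hEG]; exact Finset.mem_singleton_self l
      exact (Finset.mem_inter.1 h).2
    have hunion : E' ∪ G = Finset.Icc 1 l := by
      apply Finset.Subset.antisymm
      · exact Finset.union_subset (hgenIcc i E' hE') (hgenIcc j G hG)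
      · intro t ht
        by_contra htEG
        rw [Finset.mem_union] at htEG
        push_neg at htEG
        obtain ⟨ht1, htle⟩ := Finset.mem_Icc.1 ht
        have htl : t < l := lt_of_le_of_ne htle (fun h => htEG.1 (h ▸ hlE'))
        have hup : upSet n (R i) (insert t (E'.erase l)) ⊆ F i :=
          shift_upSet (hlc i) ht1 htl hln hlE' htEG.1 hE'.2.2.1
        have htE'e : t ∉ E'.erase l := fun h => htEG.1 (Finset.mem_of_mem_erase h)
        refine disjoint_contra hRne hi0 hk2 hn2 hcross (Ne.symm hj) ?_ hG.1 ?_ ?_ hG.2.1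
          hup hG.2.2.1
        · intro x hx
          rcases Finset.mem_insert.1 hx with h | h
          · subst h; exact Finset.mem_Icc.2 ⟨ht1, le_trans htle hln⟩
          · exact hE'.1 (Finset.mem_of_mem_erase h)
        · ext x
          simp only [Finset.mem_inter, Finset.mem_insert, Finset.mem_erase,
            Finset.notMem_empty, iff_false, not_and]
          rintro (h | ⟨hxl, hxE⟩)
          · subst h; exact fun h => htEG.2 h
          · intro hxG
            have : x ∈ E' ∩ G := Finset.mem_inter.2 ⟨hxE, hxG⟩
            rw [hEG, Finset.mem_singleton] at this
            exact hxl this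
        · rw [Finset.card_insert_of_notMem htE'e, Finset.card_erase_of_mem hlE',
            Nat.sub_add_cancel (Finset.card_pos.2 ⟨l, hlE'⟩)]
          exact hE'.2.1
    refine ⟨hunion, ?_⟩
    have h := Finset.card_union_add_card_inter E' G
    rw [hunion, hEG, Finset.card_singleton, Nat.card_Icc] at h
    omega
  refine ⟨?_, part2⟩
  -- Part 1
  obtain ⟨T, hTup, hTF⟩ : ∃ T ∈ upSet n (R i) (E.erase l), T ∉ F i := by
    have h := hE.2.2.2 (E.erase l) (Finset.erase_ssubset hEl)
    rwa [Finset.not_subset] at h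
  have hTmem := mem_upSet.1 hTup
  obtain ⟨j, hj, B, hB, hBT⟩ : ∃ j, j ≠ i ∧ ∃ B ∈ F j, B ∩ T = ∅ := by
    by_contra hcon
    push_neg at hcon
    set F' := Function.update F i (insert T (F i)) with hF'
    have hupd : ∀ j, j ≠ i → F' j = F j := fun j hj => Function.update_of_ne hj _ _
    have hupdi : F' i = insert T (F i) := Function.update_self _ _ _
    have h1 : ∀ j, F' j ⊆ famR n (R j) := by
      intro j
      by_cases hji : j = i
      · subst hji
        rw [hupdi]
        exact Finset.insert_subset (Finset.mem_filter.1 hTup).1 (hF j)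
      · rw [hupd j hji]; exact hF j
    have h2 : ∀ j, (F' j).Nonempty := by
      intro j
      by_cases hji : j = i
      · subst hji; rw [hupdi]; exact Finset.insert_nonempty _ _
      · rw [hupd j hji]; exact hFne j
    have h3 : ∀ a b, a ≠ b → ∀ A ∈ F' a, ∀ B ∈ F' b, (A ∩ B).Nonempty := by
      intro a b hab A hA B hB
      by_cases ha : a = i
      · subst ha
        rw [hupdi, Finset.mem_insert] at hA
        rw [hupd b (Ne.symm hab)] at hB
        rcases hA with h | h
        · subst h
          have := hcon b (fun h => hab h.symm) B hB
          obtain ⟨x, hx⟩ := this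
          exact ⟨x, Finset.mem_inter.2 ⟨(Finset.mem_inter.1 hx).2, (Finset.mem_inter.1 hx).1⟩⟩
        · exact hcross a b hab A h B hB
      · rw [hupd a ha] at hA
        by_cases hb : b = i
        · subst hb
          rw [hupdi, Finset.mem_insert] at hB
          rcases hB with h | h
          · subst h
            have := hcon a ha A hA
            obtain ⟨x, hx⟩ := this
            exact ⟨x, hx⟩
          · exact hcross a b hab A hA B h
        · rw [hupd b hb] at hB
          exact hcross a b hab A hA B hB
    have h4 := hmax F' h1 h2 h3
    have hcard : ∑ j, (F' j).card = (∑ j, (F j).card) + 1 := by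
      have hc : ∀ j, (F' j).card = (F j).card + if j = i then 1 else 0 := by
        intro j
        by_cases hji : j = i
        · subst hji
          rw [hupdi, Finset.card_insert_of_notMem hTF, if_pos rfl]
        · rw [hupd j hji, if_neg hji]; omega
      rw [Finset.sum_congr rfl (fun j _ => hc j), Finset.sum_add_distrib]
      simp
    omega
  obtain ⟨G, hGB, hG⟩ := exists_gen_subset (hF j) (hmono j) hB
  have hGE : E ∩ G ⊆ {l} := by
    intro x hx
    rw [Finset.mem_inter] at hx
    rw [Finset.mem_singleton]
    by_contra hxl
    have hxT : x ∈ T := hTmem.2.2 (Finset.mem_erase.2 ⟨hxl, hx.1⟩)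
    have : x ∈ B ∩ T := Finset.mem_inter.2 ⟨hGB hx.2, hxT⟩
    rw [hBT] at this
    exact absurd this (Finset.notMem_empty x)
  have hGEne : (E ∩ G).Nonempty := by
    rw [Finset.nonempty_iff_ne_empty]
    intro hcon
    exact disjoint_contra hRne hi0 hk2 hn2 hcross (Ne.symm hj) hE.1 hG.1 hcon
      hE.2.1 hG.2.1 hE.2.2.1 hG.2.2.1
  have hEGl : E ∩ G = {l} := by
    rcases Finset.subset_singleton_iff.1 hGE with h | h
    · rw [h] at hGEne; exact absurd rfl (Finset.nonempty_iff_ne_empty.1 hGEne)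
    · exact h
  have hlG : l ∈ G := by
    have h : l ∈ E ∩ G := by rw [hEGl]; exact Finset.mem_singleton_self l
    exact (Finset.mem_inter.1 h).2
  obtain ⟨_, hcards⟩ := part2 j hj E G hE hG hEGl
  exact ⟨j, hj, G, hG, by omega, hlG⟩
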